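/- Let H be a stack history with no failed operations such that res(o) < 0 for every o ∈ H, and let mirror(H) consist of one fresh operation per o ∈ H having the same value as o, method push if o has method pop, method pop if o has method push, method peek if o has method peek, invocation time −res(o) and response time −inv(o). Then H is linearizable with respect to T_stack if and only if H ∪ mirror(H) is linearizable with respect to T_stack. -/
import Mathlib


structure Operation (M V : Type) where
  id : ℕ
  method : M
  value : V
  tinv : ℚ
  tres : ℚ
deriving DecidableEq

def WellFormed {M V : Type} (H : Finset (Operation M V)) : Prop :=
  ∀ o ∈ H, o.tinv < o.tres

def IsPartitionState {M V : Type} (H S : Finset (Operation M V)) : Prop :=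
  S ⊆ H ∧ ∃ t : ℚ, ∀ o ∈ H, (o.tres < t → o ∈ S) ∧ (t < o.tinv → o ∉ S)

def IsLinearization {M V : Type} (X : Finset (Operation M V)) (ℓ : Operation M V → ℚ) : Prop :=
  Set.InjOn ℓ ↑X ∧ ∀ o ∈ X, o.tinv < ℓ o ∧ ℓ o < o.tres

/-- `τ` is the abstract sequence induced by `ℓ` on `X`: it lists the
abstractions of the elements of `X` in increasing order of `ℓ`. -/
def InducedSeq {M V A : Type} (abs : Operation M V → A) (X : Finset (Operation M V))
    (ℓ : Operation M V → ℚ) (τ : List A) : Prop :=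
  ∃ ops : List (Operation M V), ops.map abs = τ ∧ (∀ o, o ∈ ops ↔ o ∈ X) ∧
    ops.Pairwise (fun a b => ℓ a < ℓ b)

/-- A specification is prefix-closed. -/
def PrefixClosed {A : Type} (T : Set (List A)) : Prop :=
  ∀ u v : List A, u ++ v ∈ T → u ∈ T

/-- The certificate of a set of operations: all abstract sequences induced by
legal linearizations of it. -/
def certs {M V : Type} (T : Set (List (M × V))) (S : Finset (Operation M V)) :
    Set (List (M × V)) :=
  {τ | ∃ ℓ, IsLinearization S ℓ ∧
    InducedSeq (fun o => (o.method, o.value)) S ℓ τ ∧ τ ∈ T}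

/-- τ1 ∼ τ2 : the two sequences admit exactly the same legal continuations. -/
def SpecEquiv {A : Type} (T : Set (List A)) (τ1 τ2 : List A) : Prop :=
  ∀ τ' : List A, τ1 ++ τ' ∈ T ↔ τ2 ++ τ' ∈ T

/-- A specification is anagram-agnostic if any two of its members that are
permutations of one another are equivalent. -/
def AnagramAgnostic {A : Type} (T : Set (List A)) : Prop :=
  ∀ τ1 ∈ T, ∀ τ2 ∈ T, τ1.Perm τ2 → SpecEquiv T τ1 τ2

inductive StackOp (V : Type) : Type
  | push (v : V) : StackOp V
  | pop (v : V) : StackOp V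
  | peek (v : V) : StackOp V
deriving DecidableEq

/-- Execution of stack sequences: `StackExec σ w σ'` holds when the sequence
`w` can be legally executed starting from stack `σ` (top at the head), ending
with stack `σ'`.  `push v` pushes `v`; `pop v` (resp. `peek v`) is enabled
only when the top is `v` and removes it (resp. leaves the stack unchanged). -/
inductive StackExec {V : Type} : List V → List (StackOp V) → List V → Prop
  | nil (σ : List V) : StackExec σ [] σ
  | push {σ σ' : List V} {w : List (StackOp V)} (v : V) :
      StackExec (v :: σ) w σ' → StackExec σ (StackOp.push v :: w) σ'
  | pop {σ σ' : List V} {w : List (StackOp V)} (v : V) :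
      StackExec σ w σ' → StackExec (v :: σ) (StackOp.pop v :: w) σ'
  | peek {σ σ' : List V} {w : List (StackOp V)} (v : V) :
      StackExec (v :: σ) w σ' → StackExec (v :: σ) (StackOp.peek v :: w) σ'

/-- The stack specification: sequences executable from the empty stack. -/
def TStack (V : Type) : Set (List (StackOp V)) :=
  {w | ∃ σ : List V, StackExec [] w σ}

/-- Methods of the stack data type. -/
inductive StackMethod : Type
  | push : StackMethod
  | pop : StackMethod
  | peek : StackMethod
deriving DecidableEq

/-- The stack symbol `m(o)(v(o))` of an operation. -/
def absStackOp {V : Type} (o : Operation StackMethod V) : StackOp V :=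
  match o.method with
  | StackMethod.push => StackOp.push o.value
  | StackMethod.pop => StackOp.pop o.value
  | StackMethod.peek => StackOp.peek o.value

/-- `X` is linearizable w.r.t. specification `T`: some linearization of `X`
induces an abstract sequence belonging to `T`. -/
def Linearizable {M V A : Type} (T : Set (List A)) (abs : Operation M V → A)
    (X : Finset (Operation M V)) : Prop :=
  ∃ (ℓ : Operation M V → ℚ) (τ : List A),
    IsLinearization X ℓ ∧ InducedSeq abs X ℓ τ ∧ τ ∈ T

/-- The mirrored method: push ↦ pop, pop ↦ push, peek ↦ peek. -/
def mirrorMethod : StackMethod → StackMethod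
  | StackMethod.push => StackMethod.pop
  | StackMethod.pop => StackMethod.push
  | StackMethod.peek => StackMethod.peek

/-- The mirror of an operation: same value, mirrored method, and the time
interval flipped along zero. -/
def mirrorOp {V : Type} (o : Operation StackMethod V) : Operation StackMethod V :=
  ⟨o.id, mirrorMethod o.method, o.value, -o.tres, -o.tinv⟩

/-- Mirror of a stack symbol. -/
def mirrorStackOp {V : Type} : StackOp V → StackOp V
  | StackOp.push v => StackOp.pop v
  | StackOp.pop v => StackOp.push v
  | StackOp.peek v => StackOp.peek v

lemma abs_mirrorOp {V : Type} (o : Operation StackMethod V) :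
    absStackOp (mirrorOp o) = mirrorStackOp (absStackOp o) := by
  cases h : o.method <;> simp [absStackOp, mirrorOp, mirrorMethod, h, mirrorStackOp]

lemma mirrorOp_mirrorOp {V : Type} (o : Operation StackMethod V) :
    mirrorOp (mirrorOp o) = o := by
  cases o with
  | mk i m v a b => cases m <;> simp [mirrorOp, mirrorMethod]

lemma stackExec_append {V : Type} {σ σ' σ'' : List V} {u v : List (StackOp V)}
    (h1 : StackExec σ u σ') (h2 : StackExec σ' v σ'') : StackExec σ (u ++ v) σ'' := by
  induction h1 with
  | nil => simpa using h2
  | push w _ ih => exact StackExec.push w (ih h2)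
  | pop w _ ih => exact StackExec.pop w (ih h2)
  | peek w _ ih => exact StackExec.peek w (ih h2)

lemma stackExec_split {V : Type} {σ σ'' : List V} (u : List (StackOp V))
    {v : List (StackOp V)} (h : StackExec σ (u ++ v) σ'') :
    ∃ σ', StackExec σ u σ' ∧ StackExec σ' v σ'' := by
  induction u generalizing σ with
  | nil => exact ⟨σ, StackExec.nil σ, h⟩
  | cons x t ih =>
    cases h with
    | push w hw =>
      obtain ⟨σ', h1, h2⟩ := ih hw
      exact ⟨σ', StackExec.push w h1, h2⟩
    | pop w hw =>
      obtain ⟨σ', h1, h2⟩ := ih hw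
      exact ⟨σ', StackExec.pop w h1, h2⟩
    | peek w hw =>
      obtain ⟨σ', h1, h2⟩ := ih hw
      exact ⟨σ', StackExec.peek w h1, h2⟩

lemma stackExec_mirror {V : Type} {σ σ' : List V} {w : List (StackOp V)}
    (h : StackExec σ w σ') : StackExec σ' (w.reverse.map mirrorStackOp) σ := by
  induction h with
  | nil σ => simpa using StackExec.nil σ
  | push v _ ih =>
    simp only [List.reverse_cons, List.map_append, List.map_cons, List.map_nil]
    exact stackExec_append ih (StackExec.pop v (StackExec.nil _))
  | pop v _ ih =>
    simp only [List.reverse_cons, List.map_append, List.map_cons, List.map_nil]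
    exact stackExec_append ih (StackExec.push v (StackExec.nil _))
  | peek v _ ih =>
    simp only [List.reverse_cons, List.map_append, List.map_cons, List.map_nil]
    exact stackExec_append ih (StackExec.peek v (StackExec.nil _))

lemma sorted_dropWhile_nonneg {α : Type} (f : α → ℚ) :
    ∀ (l : List α), l.Pairwise (fun a b => f a < f b) →
      ∀ o ∈ l.dropWhile (fun o => decide (f o < 0)), ¬ f o < 0 := by
  intro l
  induction l with
  | nil => intro _ o ho; simp at ho
  | cons x t ih =>
    intro hp o ho
    rw [List.pairwise_cons] at hp
    by_cases hx : f x < 0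
    · rw [List.dropWhile_cons_of_pos (by simpa using hx)] at ho
      exact ih hp.2 o ho
    · rw [List.dropWhile_cons_of_neg (by simpa using hx)] at ho
      rcases List.mem_cons.mp ho with rfl | ho
      · exact hx
      · intro hfo; exact hx (lt_trans (hp.1 o ho) hfo)

theorem stmt17 {V : Type} [DecidableEq V]
    (H : Finset (Operation StackMethod V)) (hwf : WellFormed H)
    (hneg : ∀ o ∈ H, o.tres < 0) :
    Linearizable (TStack V) absStackOp H ↔
      Linearizable (TStack V) absStackOp (H ∪ H.image mirrorOp) := by
  constructor
  · rintro ⟨ℓ, τ, ⟨hinj, hbounds⟩, ⟨ops, hmap, hmem, hpair⟩, σ, hexec⟩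
    set ℓ' : Operation StackMethod V → ℚ :=
      fun o => if o.tres < 0 then ℓ o else -ℓ (mirrorOp o) with hℓ'
    have hℓ'H : ∀ o ∈ H, ℓ' o = ℓ o := fun o ho => if_pos (hneg o ho)
    have hℓneg : ∀ o ∈ H, ℓ o < 0 := fun o ho =>
      lt_trans (hbounds o ho).2 (hneg o ho)
    have hℓ'M : ∀ o ∈ H, ℓ' (mirrorOp o) = -ℓ o := by
      intro o ho
      have h1 : ¬ (mirrorOp o).tres < 0 := by
        simp only [mirrorOp]
        have := hwf o ho
        have := hneg o ho
        linarith
      simp [hℓ', if_neg h1, mirrorOp_mirrorOp]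
    have hℓ'Mpos : ∀ o ∈ H, 0 < ℓ' (mirrorOp o) := by
      intro o ho; rw [hℓ'M o ho]; linarith [hℓneg o ho]
    refine ⟨ℓ', τ ++ τ.reverse.map mirrorStackOp, ⟨?_, ?_⟩,
      ⟨ops ++ ops.reverse.map mirrorOp, ?_, ?_, ?_⟩, ?_⟩
    · -- injectivity
      intro x hx y hy hxy
      simp only [Finset.coe_union, Set.mem_union, Finset.coe_image, Set.mem_image,
        Finset.mem_coe] at hx hy
      rcases hx with hx | ⟨a, ha, rfl⟩ <;> rcases hy with hy | ⟨b, hb, rfl⟩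
      · exact hinj hx hy (by rwa [hℓ'H x hx, hℓ'H y hy] at hxy)
      · exfalso
        rw [hℓ'H x hx] at hxy
        have := hℓneg x hx; have := hℓ'Mpos b hb
        linarith
      · exfalso
        rw [hℓ'H y hy] at hxy
        have := hℓneg y hy; have := hℓ'Mpos a ha
        linarith
      · rw [hℓ'M a ha, hℓ'M b hb, neg_inj] at hxy
        rw [hinj ha hb hxy]
    · -- bounds
      intro o ho
      rcases Finset.mem_union.mp ho with ho | ho
      · rw [hℓ'H o ho]; exact hbounds o ho
      · obtain ⟨a, ha, rfl⟩ := Finset.mem_image.mp ho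
        rw [hℓ'M a ha]
        have := hbounds a ha
        constructor <;> simp only [mirrorOp] <;> linarith [this.1, this.2]
    · -- map abs
      have hmm : (ops.reverse.map mirrorOp).map absStackOp
          = (ops.map absStackOp).reverse.map mirrorStackOp := by
        rw [List.map_map, List.map_reverse, List.map_reverse, List.map_map]
        simp only [Function.comp_def, abs_mirrorOp]
      rw [List.map_append, hmap, hmm, hmap]
    · -- membership
      intro o
      simp only [List.mem_append, List.mem_map, List.mem_reverse, hmem,
        Finset.mem_union, Finset.mem_image]
    · -- pairwise
      rw [List.pairwise_append]
      refine ⟨hpair.imp_of_mem ?_, ?_, ?_⟩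
      · intro a b ha hb hab
        rw [hℓ'H a ((hmem a).mp ha), hℓ'H b ((hmem b).mp hb)]; exact hab
      · rw [List.pairwise_map, List.pairwise_reverse]
        refine hpair.imp_of_mem ?_
        intro a b ha hb hab
        rw [hℓ'M a ((hmem a).mp ha), hℓ'M b ((hmem b).mp hb)]
        linarith
      · intro a ha b hb
        rw [List.mem_map] at hb
        obtain ⟨c, hc, rfl⟩ := hb
        rw [List.mem_reverse] at hc
        have h1 := hℓneg a ((hmem a).mp ha)
        have h2 := hℓ'Mpos c ((hmem c).mp hc)
        rw [hℓ'H a ((hmem a).mp ha)]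
        linarith
    · exact ⟨[], stackExec_append hexec (stackExec_mirror hexec)⟩
  · rintro ⟨ℓ, τ, ⟨hinj, hbounds⟩, ⟨ops, hmap, hmem, hpair⟩, σ, hexec⟩
    have hsub : H ⊆ H ∪ H.image mirrorOp := Finset.subset_union_left
    have hℓneg : ∀ o ∈ H, ℓ o < 0 := fun o ho =>
      lt_trans (hbounds o (hsub ho)).2 (hneg o ho)
    have hℓMpos : ∀ o ∈ H.image mirrorOp, 0 < ℓ o := by
      intro o ho
      obtain ⟨a, ha, rfl⟩ := Finset.mem_image.mp ho
      have h1 : -a.tres < ℓ (mirrorOp a) := (hbounds _ (Finset.mem_union_right _ ho)).1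
      have h2 := hneg a ha
      linarith
    set p : Operation StackMethod V → Bool := fun o => decide (ℓ o < 0) with hp
    set opsH := ops.takeWhile p with hopsH
    have hdrop : ∀ o ∈ ops.dropWhile p, ¬ ℓ o < 0 :=
      sorted_dropWhile_nonneg ℓ ops hpair
    have htake : ∀ o ∈ opsH, ℓ o < 0 := by
      intro o ho
      have := List.mem_takeWhile_imp ho
      simpa [hp] using this
    have hmemH : ∀ o, o ∈ opsH ↔ o ∈ H := by
      intro o
      constructor
      · intro ho
        have hops : o ∈ ops := (List.takeWhile_sublist p).subset ho
        rcases Finset.mem_union.mp ((hmem o).mp hops) with h | h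
        · exact h
        · exact absurd (htake o ho) (not_lt.mpr (le_of_lt (hℓMpos o h)))
      · intro ho
        have hops : o ∈ ops := (hmem o).mpr (Finset.mem_union_left _ ho)
        rw [← List.takeWhile_append_dropWhile (p := p) (l := ops)] at hops
        rcases List.mem_append.mp hops with h | h
        · exact h
        · exact absurd (hℓneg o ho) (hdrop o h)
    have hpairH : opsH.Pairwise (fun a b => ℓ a < ℓ b) :=
      hpair.sublist (List.takeWhile_sublist p)
    have hτsplit : τ = opsH.map absStackOp ++ (ops.dropWhile p).map absStackOp := by
      rw [← hmap, ← List.map_append, List.takeWhile_append_dropWhile]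
    obtain ⟨σ', hexec', _⟩ := stackExec_split (opsH.map absStackOp)
      (by rw [← hτsplit]; exact hexec)
    refine ⟨ℓ, opsH.map absStackOp, ⟨?_, ?_⟩, ⟨opsH, rfl, hmemH, hpairH⟩, σ', hexec'⟩
    · exact hinj.mono (by exact_mod_cast hsub)
    · exact fun o ho => hbounds o (hsub ho)
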